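/- Let w, w*, τ be square-integrable random variables with ε = w - w*, Cov(w, ε) = 0, Var(w*) > 0, Var(τ) > 0, Var(ε) > 0. Let R² = Var(ε)/Var(w*). Then cor(ε, τ) = cor(w, τ)·√((1-R²)/R²) − cor(w*, τ)·√(1/R²). -/

import Mathlib

open MeasureTheory ProbabilityTheory

noncomputable def cov {Ω : Type*} [MeasureSpace Ω] (X Y : Ω → ℝ) : ℝ :=
  ∫ ω, (X ω - ∫ a, X a) * (Y ω - ∫ a, Y a)

noncomputable def cor {Ω : Type*} [MeasureSpace Ω] (X Y : Ω → ℝ) : ℝ :=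
  cov X Y / Real.sqrt (variance X volume * variance Y volume)

section Aux

variable {Ω : Type*} [MeasureSpace Ω] [IsProbabilityMeasure (volume : Measure Ω)]

omit [IsProbabilityMeasure (volume : Measure Ω)] in
lemma l2_mul_integrable {f g : Ω → ℝ} (hf : MemLp f 2 volume) (hg : MemLp g 2 volume) :
    Integrable (fun x => f x * g x) volume := by
  refine (hf.integrable_sq.add hg.integrable_sq).mono'
    (hf.aestronglyMeasurable.mul hg.aestronglyMeasurable) (ae_of_all _ fun x => ?_)
  simp only [Pi.add_apply]
  rw [Real.norm_eq_abs, abs_mul]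
  nlinarith [sq_nonneg (|f x| - |g x|), sq_abs (f x), sq_abs (g x), abs_nonneg (f x),
    abs_nonneg (g x)]

lemma integrable_cov {X Y : Ω → ℝ} (hX : MemLp X 2 volume) (hY : MemLp Y 2 volume) :
    Integrable (fun ω => (X ω - ∫ a, X a) * (Y ω - ∫ a, Y a)) volume :=
  l2_mul_integrable (hX.sub (memLp_const _)) (hY.sub (memLp_const _))

omit [IsProbabilityMeasure (volume : Measure Ω)] in
lemma cov_symm (X Y : Ω → ℝ) : cov X Y = cov Y X := by
  unfold cov
  simp_rw [mul_comm]

lemma cov_sub_left {X Y Z : Ω → ℝ} (hX : MemLp X 2 volume) (hY : MemLp Y 2 volume)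
    (hZ : MemLp Z 2 volume) :
    cov (fun ω => X ω - Y ω) Z = cov X Z - cov Y Z := by
  have hint : ∫ a, (X a - Y a) = (∫ a, X a) - ∫ a, Y a :=
    integral_sub (hX.integrable one_le_two) (hY.integrable one_le_two)
  unfold cov
  simp only [hint]
  have key : ∀ ω, (X ω - Y ω - ((∫ a, X a) - ∫ a, Y a)) * (Z ω - ∫ a, Z a)
      = (X ω - ∫ a, X a) * (Z ω - ∫ a, Z a) - (Y ω - ∫ a, Y a) * (Z ω - ∫ a, Z a) :=
    fun ω => by ring
  simp_rw [key]
  exact integral_sub (integrable_cov hX hZ) (integrable_cov hY hZ)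

lemma cov_self {X : Ω → ℝ} (hX : MemLp X 2 volume) : cov X X = variance X volume := by
  rw [variance_eq_integral hX.aestronglyMeasurable.aemeasurable]
  unfold cov
  simp only [Pi.pow_apply, Pi.sub_apply, sq]

lemma cov_eq_zero_of_var_zero {X Y : Ω → ℝ} (hX : MemLp X 2 volume) (hY : MemLp Y 2 volume)
    (h : variance X volume = 0) : cov X Y = 0 := by
  have h2 : ∫ ω, (X ω - ∫ a, X a) ^ 2 = 0 := by
    have := variance_eq_integral hX.aestronglyMeasurable.aemeasurable
    rw [h] at this
    simpa using this.symm
  have hint : Integrable (fun ω => (X ω - ∫ a, X a) ^ 2) volume :=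
    (hX.sub (memLp_const _)).integrable_sq
  have hzero : (fun ω => (X ω - ∫ a, X a) ^ 2) =ᵐ[volume] 0 :=
    (integral_eq_zero_iff_of_nonneg (fun ω => sq_nonneg _) hint).1 h2
  have hz : (fun ω => (X ω - ∫ a, X a) * (Y ω - ∫ a, Y a)) =ᵐ[volume] 0 := by
    filter_upwards [hzero] with ω hω
    have : X ω - ∫ a, X a = 0 := by
      have := pow_eq_zero_iff (n := 2) (by norm_num) |>.1 hω
      exact this
    simp [this]
  unfold cov
  rw [integral_congr_ae hz]
  simp

end Aux

/-- Correlation decomposition: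
`cor(ε, τ) = cor(w, τ)·√((1-R²)/R²) − cor(w*, τ)·√(1/R²)`. -/
theorem correlation_decomposition {Ω : Type*} [MeasureSpace Ω]
    [IsProbabilityMeasure (volume : Measure Ω)]
    (w wstar τ ε : Ω → ℝ)
    (hw : MemLp w 2 volume) (hwstar : MemLp wstar 2 volume) (hτ : MemLp τ 2 volume)
    (hε : ε = fun ω => w ω - wstar ω)
    (hcov : cov w ε = 0)
    (hvarwstar : 0 < variance wstar volume)
    (hvarτ : 0 < variance τ volume)
    (hvarε : 0 < variance ε volume)
    (R2 : ℝ) (hR2 : R2 = variance ε volume / variance wstar volume) :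
    cor ε τ = cor w τ * Real.sqrt ((1 - R2) / R2) - cor wstar τ * Real.sqrt (1 / R2) := by
  subst hR2
  have hεm : MemLp ε 2 volume := by rw [hε]; exact hw.sub hwstar
  set a := variance w volume with ha_def
  set b := variance wstar volume with hb_def
  set e := variance ε volume with he_def
  set t := variance τ volume with ht_def
  set cw := cov w τ with hcw_def
  set cs := cov wstar τ with hcs_def
  -- covariance facts
  have h1 : cov ε τ = cw - cs := by rw [hε]; exact cov_sub_left hw hwstar hτ
  have hww : cov wstar w = a := by
    have := cov_sub_left hw hwstar hw (Z := w)
    rw [← hε, cov_symm ε w, hcov, cov_self hw] at this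
    linarith [this]
  have hae : a = b - e := by
    have h3 : cov ε wstar = a - b := by
      rw [hε, cov_sub_left hw hwstar hwstar, cov_self hwstar, cov_symm w wstar, hww]
    have h4 : cov ε ε = e := cov_self hεm
    have h5 : cov ε ε = cov ε w - cov ε wstar := by
      conv_lhs => rw [show cov ε ε = cov ε (fun ω => w ω - wstar ω) by rw [← hε]]
      rw [cov_symm ε (fun ω => w ω - wstar ω), cov_sub_left hw hwstar hεm,
        cov_symm w ε, cov_symm wstar ε]
    have h6 : cov ε w = 0 := by rw [cov_symm]; exact hcov
    rw [h4, h6, h3] at h5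
    linarith
  have ha_nn : 0 ≤ a := variance_nonneg _ _
  have hb0 : b ≠ 0 := ne_of_gt hvarwstar
  have he0 : e ≠ 0 := ne_of_gt hvarε
  -- sqrt simplifications
  have harg1 : (1 - e / b) / (e / b) = a / e := by
    rw [hae]; field_simp
  have harg2 : (1 : ℝ) / (e / b) = b / e := one_div_div _ _
  have hsb : Real.sqrt b ≠ 0 := by positivity
  have hse : Real.sqrt e ≠ 0 := by positivity
  have hst : Real.sqrt t ≠ 0 := by positivity
  unfold cor
  simp only [← ha_def, ← hb_def, ← he_def, ← ht_def, ← hcw_def, ← hcs_def]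
  rw [h1, harg1, harg2, Real.sqrt_div ha_nn, Real.sqrt_div hvarwstar.le,
    Real.sqrt_mul hvarε.le, Real.sqrt_mul ha_nn, Real.sqrt_mul hvarwstar.le]
  rcases eq_or_lt_of_le ha_nn with ha0 | hapos
  · have hcw0 : cw = 0 := cov_eq_zero_of_var_zero hw hτ ha0.symm
    rw [hcw0, ← ha0]
    field_simp
    ring
  · have hsa : Real.sqrt a ≠ 0 := by positivity
    field_simp
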